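/- Let Γ = {Σ_{i=0}^n a_i 3^i : a_i ∈ {0,1}} ⊂ ℕ₀. If μ is a compactly supported Borel probability measure on ℝ such that {e_γ : γ ∈ Γ} is orthogonal in L²(μ), then μ̂(n) = 0 for every nonzero integer n; moreover {e_γ : γ ∈ Γ} is never complete in L²(μ) for such μ, since e_2 is orthogonal to e_γ for all γ ∈ Γ but 2 ∉ Γ. -/

import Mathlib

open Complex Real MeasureTheory

/-- The set of nonnegative integers whose base-3 expansion uses only digits 0 and 1. -/
def GammaThree : Set ℕ :=
  {n : ℕ | ∃ (m : ℕ) (a : ℕ → ℕ), (∀ i, a i ≤ 1) ∧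
    n = ∑ i ∈ Finset.range (m + 1), a i * 3 ^ i}

/-- The Fourier transform `μ̂(t) = ∫ e^{2πitx} dμ(x)` of a measure on `ℝ`. -/
noncomputable def muHat1 (μ : Measure ℝ) (t : ℝ) : ℂ :=
  ∫ x, Complex.exp (2 * Real.pi * Complex.I * t * x) ∂μ

lemma gamma_zero : 0 ∈ GammaThree := ⟨0, fun _ => 0, fun _ => Nat.zero_le 1, by simp⟩

lemma gamma_mul3_add (n : ℕ) (r : ℕ) (hr : r ≤ 1) (hn : n ∈ GammaThree) :
    3 * n + r ∈ GammaThree := by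
  obtain ⟨m, a, ha, hsum⟩ := hn
  refine ⟨m + 1, fun i => if i = 0 then r else a (i - 1),
    fun i => by dsimp; split <;> simp [hr, ha], ?_⟩
  rw [Finset.sum_range_succ']
  simp only [if_pos rfl, Nat.add_sub_cancel, if_neg (Nat.succ_ne_zero _)]
  rw [hsum, Finset.mul_sum]
  congr 1
  · exact Finset.sum_congr rfl fun i _ => by ring
  · simp

lemma two_not_gamma : (2 : ℕ) ∉ GammaThree := by
  rintro ⟨m, a, ha, hsum⟩
  rw [Finset.sum_range_succ'] at hsum
  have h3 : ∑ i ∈ Finset.range m, a (i + 1) * 3 ^ (i + 1)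
      = 3 * ∑ i ∈ Finset.range m, a (i + 1) * 3 ^ i := by
    rw [Finset.mul_sum]; exact Finset.sum_congr rfl fun i _ => by ring
  rw [h3] at hsum
  have := ha 0
  omega

lemma gamma_diff : ∀ N : ℕ, ∃ a b : ℕ, a ∈ GammaThree ∧ b ∈ GammaThree ∧ (a : ℤ) - b = N := by
  intro N
  induction N using Nat.strong_induction_on with
  | _ N ih =>
    rcases Nat.eq_zero_or_pos N with h0 | h0
    · exact ⟨0, 0, gamma_zero, gamma_zero, by simp [h0]⟩
    have h3 : N % 3 < 3 := Nat.mod_lt _ (by norm_num)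
    interval_cases h : N % 3
    · obtain ⟨a, b, hA, hB, hab⟩ := ih (N / 3) (by omega)
      exact ⟨3 * a, 3 * b, by simpa using gamma_mul3_add a 0 (by norm_num) hA,
        by simpa using gamma_mul3_add b 0 (by norm_num) hB, by push_cast; omega⟩
    · obtain ⟨a, b, hA, hB, hab⟩ := ih (N / 3) (by omega)
      exact ⟨3 * a + 1, 3 * b, gamma_mul3_add a 1 le_rfl hA,
        by simpa using gamma_mul3_add b 0 (by norm_num) hB, by push_cast; omega⟩
    · obtain ⟨a, b, hA, hB, hab⟩ := ih (N / 3 + 1) (by omega)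
      exact ⟨3 * a, 3 * b + 1, by simpa using gamma_mul3_add a 0 (by norm_num) hA,
        gamma_mul3_add b 1 le_rfl hB, by push_cast; omega⟩

lemma inner_exp_toLp (μ : Measure ℝ) (s t : ℕ)
    (hs : MemLp (fun x : ℝ => Complex.exp (2 * Real.pi * Complex.I * s * x)) 2 μ)
    (ht : MemLp (fun x : ℝ => Complex.exp (2 * Real.pi * Complex.I * t * x)) 2 μ) :
    @inner ℂ _ _ (hs.toLp _) (ht.toLp _) = muHat1 μ ((t : ℝ) - s) := by
  rw [MeasureTheory.L2.inner_def, muHat1]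
  refine integral_congr_ae ?_
  filter_upwards [hs.coeFn_toLp, ht.coeFn_toLp] with x hx hx'
  rw [hx, hx']
  simp only [RCLike.inner_apply, ← starRingEnd_apply]
  rw [← Complex.exp_conj, ← Complex.exp_add]
  congr 1
  simp only [map_mul, Complex.conj_I, Complex.conj_ofReal, map_ofNat, map_natCast]
  push_cast
  ring

/-- If `μ` is a compactly supported Borel probability measure on `ℝ` for which
the exponentials `{e_γ : γ ∈ Γ}` (with `Γ` the base-3 digit set `{0,1}` integers)
are orthogonal in `L²(μ)`, then `μ̂(n) = 0` for every nonzero integer `n`;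
moreover `{e_γ : γ ∈ Γ}` is not complete in `L²(μ)`: indeed `2 ∉ Γ` and `e_2`
is orthogonal to every `e_γ`, `γ ∈ Γ`. -/
theorem stmt19 (μ : Measure ℝ) [IsProbabilityMeasure μ]
    (hK : ∃ K : Set ℝ, IsCompact K ∧ μ Kᶜ = 0)
    (hmem : ∀ n : ℕ, MemLp (fun x : ℝ => Complex.exp (2 * Real.pi * Complex.I * n * x)) 2 μ)
    (horth : ∀ γ ∈ GammaThree, ∀ γ' ∈ GammaThree, γ ≠ γ' →
      muHat1 μ ((γ : ℝ) - (γ' : ℝ)) = 0) :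
    (∀ n : ℤ, n ≠ 0 → muHat1 μ (n : ℝ) = 0) ∧
    (2 : ℕ) ∉ GammaThree ∧
    (∀ γ ∈ GammaThree, muHat1 μ ((γ : ℝ) - 2) = 0) ∧
    ¬ (⊤ ≤ (Submodule.span ℂ
        (Set.range (fun γ : GammaThree => (hmem (γ : ℕ)).toLp _))).topologicalClosure) := by
  have part1 : ∀ n : ℤ, n ≠ 0 → muHat1 μ (n : ℝ) = 0 := by
    intro n hn
    rcases le_or_gt 0 n with h | h
    · obtain ⟨a, b, hA, hB, hab⟩ := gamma_diff n.toNat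
      have hab' : (a : ℤ) - b = n := by rwa [Int.toNat_of_nonneg h] at hab
      have hne : a ≠ b := by intro he; apply hn; omega
      have := horth a hA b hB hne
      have harg : (a : ℝ) - (b : ℝ) = (n : ℝ) := by
        have := congrArg (fun z : ℤ => (z : ℝ)) hab'
        push_cast at this ⊢
        linarith
      rwa [harg] at this
    · obtain ⟨a, b, hA, hB, hab⟩ := gamma_diff (-n).toNat
      have hab' : (a : ℤ) - b = -n := by rwa [Int.toNat_of_nonneg (by omega)] at hab
      have hne : b ≠ a := by intro he; apply hn; omega
      have := horth b hB a hA hne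
      have harg : (b : ℝ) - (a : ℝ) = (n : ℝ) := by
        have := congrArg (fun z : ℤ => (z : ℝ)) hab'
        push_cast at this ⊢
        linarith
      rwa [harg] at this
  refine ⟨part1, two_not_gamma, ?_, ?_⟩
  · intro γ hγ
    have hne : (γ : ℤ) - 2 ≠ 0 := by
      intro he
      have h2 : γ = 2 := by omega
      exact two_not_gamma (h2 ▸ hγ)
    have := part1 ((γ : ℤ) - 2) hne
    have harg : (((γ : ℤ) - 2 : ℤ) : ℝ) = (γ : ℝ) - 2 := by push_cast; ring
    rwa [harg] at this
  · intro htop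
    set f := (hmem 2).toLp _ with hf
    have hperp : ∀ γ : GammaThree, @inner ℂ _ _ f ((hmem (γ : ℕ)).toLp _) = 0 := by
      intro γ
      rw [hf, inner_exp_toLp μ 2 (γ : ℕ) (hmem 2) (hmem (γ : ℕ))]
      have hne : ((γ : ℕ) : ℤ) - 2 ≠ 0 := by
        intro he
        have : (γ : ℕ) = 2 := by omega
        exact two_not_gamma (this ▸ γ.2)
      have := part1 (((γ : ℕ) : ℤ) - 2) hne
      have harg : ((((γ : ℕ) : ℤ) - 2 : ℤ) : ℝ) = ((γ : ℕ) : ℝ) - ((2 : ℕ) : ℝ) := by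
        push_cast; ring
      rwa [harg] at this
    have hsub : Set.range (fun γ : GammaThree => (hmem (γ : ℕ)).toLp _) ⊆
        ((ℂ ∙ f)ᗮ : Submodule ℂ (Lp ℂ 2 μ)) := by
      rintro _ ⟨γ, rfl⟩
      rw [SetLike.mem_coe, Submodule.mem_orthogonal_singleton_iff_inner_right]
      exact hperp γ
    have hle : (Submodule.span ℂ
        (Set.range (fun γ : GammaThree => (hmem (γ : ℕ)).toLp _))).topologicalClosure ≤
        (ℂ ∙ f)ᗮ :=
      Submodule.topologicalClosure_minimal _ (Submodule.span_le.2 hsub)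
        (Submodule.isClosed_orthogonal _)
    have hfmem : f ∈ (ℂ ∙ f)ᗮ := hle (htop Submodule.mem_top)
    have h0 : @inner ℂ _ _ f f = 0 :=
      Submodule.mem_orthogonal_singleton_iff_inner_right.1 hfmem
    have h1 : @inner ℂ _ _ f f = 1 := by
      rw [hf, inner_exp_toLp μ 2 2 (hmem 2) (hmem 2)]
      norm_num [muHat1]
    rw [h0] at h1
    exact zero_ne_one h1
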